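/- The function R(η) = (1/2)[2|η| + √π·e^{η²}·(1−2η²)·(1−erf(|η|))]·e^{−2η²} is even in η and attains its maximum at η = 0, with R(0) = √π/2. -/
import Mathlib

open Real

/-- The error function. -/
noncomputable def erf (x : ℝ) : ℝ := (2 / Real.sqrt π) * ∫ t in (0:ℝ)..x, Real.exp (-t ^ 2)

/-- The probability density of the difference η = r − s. -/
noncomputable def R (η : ℝ) : ℝ :=
  (1 / 2) * (2 * |η| + Real.sqrt π * Real.exp (η ^ 2) * (1 - 2 * η ^ 2) * (1 - erf |η|)) *
    Real.exp (-2 * η ^ 2)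

lemma erf_ge {x : ℝ} (hx : 0 ≤ x) : 2 * (x * Real.exp (-x ^ 2)) ≤ Real.sqrt π * erf x := by
  have hInt : ∀ a b : ℝ, IntervalIntegrable (fun t : ℝ => Real.exp (-t ^ 2)) MeasureTheory.volume a b :=
    fun a b => (Real.continuous_exp.comp (by continuity)).intervalIntegrable a b
  have h1 : x * Real.exp (-x ^ 2) ≤ ∫ t in (0:ℝ)..x, Real.exp (-t ^ 2) := by
    have := intervalIntegral.integral_mono_on (f := fun _ : ℝ => Real.exp (-x ^ 2))
      (g := fun t : ℝ => Real.exp (-t ^ 2)) hx intervalIntegrable_const (hInt 0 x)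
      (fun t ht => Real.exp_le_exp.2 (by nlinarith [ht.1, ht.2]))
    simpa using this
  have hpi : 0 < Real.sqrt π := Real.sqrt_pos.2 Real.pi_pos
  have h2 : Real.sqrt π * erf x = 2 * ∫ t in (0:ℝ)..x, Real.exp (-t ^ 2) := by
    unfold erf; field_simp
  rw [h2]
  linarith

lemma int_le {x : ℝ} (hx : 0 ≤ x) : (∫ t in (0:ℝ)..x, Real.exp (-t ^ 2)) ≤ Real.sqrt π / 2 := by
  rw [intervalIntegral.integral_of_le hx]
  have hInt : MeasureTheory.IntegrableOn (fun t : ℝ => Real.exp (-t ^ 2)) (Set.Ioi 0) := by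
    have := integrable_exp_neg_mul_sq (b := 1) one_pos
    simpa using this.integrableOn
  have h1 : (∫ t in Set.Ioc (0:ℝ) x, Real.exp (-t ^ 2)) ≤ ∫ t in Set.Ioi (0:ℝ), Real.exp (-t ^ 2) := by
    apply MeasureTheory.setIntegral_mono_set hInt
    · filter_upwards with t using (Real.exp_pos _).le
    · exact Filter.Eventually.of_forall Set.Ioc_subset_Ioi_self
  have h2 : (∫ t in Set.Ioi (0:ℝ), Real.exp (-t ^ 2)) = Real.sqrt π / 2 := by
    have := integral_gaussian_Ioi (b := 1)
    simpa using this
  linarith [h1, h2.le]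

lemma erf_le_one {x : ℝ} (hx : 0 ≤ x) : erf x ≤ 1 := by
  have hpi : 0 < Real.sqrt π := Real.sqrt_pos.2 Real.pi_pos
  have := int_le hx
  unfold erf
  rw [div_mul_eq_mul_div, div_le_one hpi]
  nlinarith

set_option maxHeartbeats 1600000 in
lemma key {x : ℝ} (hx : 0 ≤ x) :
    (1 / 2) * (2 * x + Real.sqrt π * Real.exp (x ^ 2) * (1 - 2 * x ^ 2) * (1 - erf x)) *
      Real.exp (-2 * x ^ 2) ≤ Real.sqrt π / 2 := by
  set c := Real.sqrt π with hc
  have hc0 : 0 < c := Real.sqrt_pos.2 Real.pi_pos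
  have hc2 : c ^ 2 = π := Real.sq_sqrt Real.pi_pos.le
  have hπ : (3:ℝ) ≤ π := Real.pi_gt_three.le
  set E := Real.exp (-x ^ 2) with hE
  have hE0 : 0 < E := Real.exp_pos _
  have hEe : Real.exp (x ^ 2) * E = 1 := by
    rw [hE, ← Real.exp_add]; simp
  have hE2 : Real.exp (-2 * x ^ 2) = E ^ 2 := by
    rw [hE]
    calc Real.exp (-2 * x ^ 2) = Real.exp (-x ^ 2 + -x ^ 2) := by congr 1; ring
      _ = Real.exp (-x ^ 2) * Real.exp (-x ^ 2) := Real.exp_add _ _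
      _ = Real.exp (-x ^ 2) ^ 2 := (sq _).symm
  have hE1 : (1 + x ^ 2) * E ≤ 1 := by
    have h := Real.add_one_le_exp (x ^ 2)
    have h2 : (x ^ 2 + 1) * E ≤ Real.exp (x ^ 2) * E :=
      mul_le_mul_of_nonneg_right h hE0.le
    rw [hEe] at h2; linarith
  have hEle1 : E ≤ 1 := by nlinarith [mul_nonneg (sq_nonneg x) hE0.le]
  set s := erf x with hs
  have hs1 : s ≤ 1 := erf_le_one hx
  have hs0 : 2 * (x * E) ≤ c * s := erf_ge hx
  rw [hE2]
  clear_value c E s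
  clear hc hE hs
  have hgoal : x * E ^ 2 + (c / 2) * (1 - 2 * x ^ 2) * (1 - s) * E ≤ c / 2 →
      (1 / 2) * (2 * x + c * Real.exp (x ^ 2) * (1 - 2 * x ^ 2) * (1 - s)) * E ^ 2 ≤ c / 2 := by
    intro h
    have heq : (1 / 2) * (2 * x + c * Real.exp (x ^ 2) * (1 - 2 * x ^ 2) * (1 - s)) * E ^ 2
        = x * E ^ 2 + (c / 2) * (1 - 2 * x ^ 2) * (1 - s) * (Real.exp (x ^ 2) * E) * E := by ring
    rw [heq, hEe]
    simpa using h
  apply hgoal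
  rcases le_or_gt (2 * x ^ 2) 1 with hcase | hcase
  · -- small x
    have hx1 : x ≤ 1 := by nlinarith
    have hc43 : (4:ℝ)/3 ≤ c := by nlinarith
    have step1 : (c / 2) * (1 - 2 * x ^ 2) * (1 - s) * E ≤
        (c / 2) * (1 - 2 * x ^ 2) * E - x * (1 - 2 * x ^ 2) * E ^ 2 := by
      have hfac : 0 ≤ (1 - 2 * x ^ 2) * E := mul_nonneg (by linarith) hE0.le
      nlinarith [mul_le_mul_of_nonneg_right hs0 hfac]
    have step3 : 2 * x ^ 3 * E ^ 2 ≤ 2 * x ^ 3 * E := by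
      nlinarith [mul_nonneg (pow_nonneg hx 3) (mul_nonneg hE0.le (by linarith : (0:ℝ) ≤ 1 - E))]
    have step4 : (2 * x ^ 3 + (c / 2) * (1 - 2 * x ^ 2)) * E ≤ c / 2 := by
      have hAle : 2 * x ^ 3 + (c / 2) * (1 - 2 * x ^ 2) ≤ (c / 2) * (1 + x ^ 2) := by
        nlinarith [mul_nonneg (by linarith : (0:ℝ) ≤ c - 4/3) (sq_nonneg x),
          mul_nonneg (by linarith : (0:ℝ) ≤ 1 - x) (sq_nonneg x)]
      calc (2 * x ^ 3 + (c / 2) * (1 - 2 * x ^ 2)) * E ≤ (c / 2) * (1 + x ^ 2) * E :=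
            mul_le_mul_of_nonneg_right hAle hE0.le
        _ ≤ c / 2 := by nlinarith [mul_le_mul_of_nonneg_left hE1 (by positivity : (0:ℝ) ≤ c/2)]
    nlinarith [step1, step3, step4]
  · -- large x
    have h1s : (0:ℝ) ≤ 1 - s := by linarith
    have hterm : (c / 2) * (1 - 2 * x ^ 2) * (1 - s) * E ≤ 0 := by
      nlinarith [mul_nonneg (mul_nonneg hc0.le (by linarith : (0:ℝ) ≤ 2*x^2 - 1))
        (mul_nonneg h1s hE0.le)]
    have hq : (1 + 2 * x ^ 2) * E ^ 2 ≤ 1 := by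
      have ha : (0:ℝ) ≤ (1 + x ^ 2) * E := by positivity
      have hb : ((1 + x ^ 2) * E) ^ 2 ≤ 1 := by nlinarith
      nlinarith [mul_nonneg (mul_nonneg (sq_nonneg (x ^ 2)) hE0.le) hE0.le]
    have hx2 : 2 * x ≤ c * (1 + 2 * x ^ 2) := by
      nlinarith [sq_nonneg (2 * c * x - 1)]
    have hxe : x * E ^ 2 ≤ c / 2 := by
      have h5 : 2 * x * E ^ 2 ≤ c * (1 + 2 * x ^ 2) * E ^ 2 :=
        mul_le_mul_of_nonneg_right hx2 (sq_nonneg E)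
      have h6 : c * ((1 + 2 * x ^ 2) * E ^ 2) ≤ c * 1 :=
        mul_le_mul_of_nonneg_left hq hc0.le
      nlinarith
    linarith

theorem stmt_11 :
    (∀ η : ℝ, R (-η) = R η) ∧ (∀ η : ℝ, R η ≤ R 0) ∧ R 0 = Real.sqrt π / 2 := by
  have hR0 : R 0 = Real.sqrt π / 2 := by
    simp [R, erf]
    ring
  refine ⟨fun η => by simp [R, abs_neg, neg_sq], fun η => ?_, hR0⟩
  rw [hR0]
  calc R η = (1 / 2) * (2 * |η| + Real.sqrt π * Real.exp (|η| ^ 2) * (1 - 2 * |η| ^ 2) * (1 - erf |η|)) *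
      Real.exp (-2 * |η| ^ 2) := by rw [R, sq_abs]
    _ ≤ Real.sqrt π / 2 := key (abs_nonneg η)
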